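/- Let A be a unique factorization domain containing ℚ, let B, F be nonzero locally nilpotent derivations of A with F irreducible, and let f ∈ ker F, f ≠ 0. If the derivations f·F and B commute (i.e. [fF, B] = 0), then B(f) = 0 and [F, B] = 0. -/
import Mathlib


/-- Local nilpotency of a map. -/
def IsLND {A : Type*} [Zero A] (D : A → A) : Prop := ∀ a : A, ∃ n : ℕ, D^[n] a = 0

/-- A locally nilpotent derivation `F` is irreducible if `F ≠ 0` and whenever
`F = g • F'` with `F'` locally nilpotent and `g ∈ ker F'`, `g` is a unit. -/
def IsIrreducibleLND {A : Type*} [CommRing A] [Algebra ℚ A] (F : Derivation ℚ A A) : Prop :=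
  F ≠ 0 ∧ IsLND ⇑F ∧
    ∀ (g : A) (F' : Derivation ℚ A A), IsLND ⇑F' → F' g = 0 → F = g • F' → IsUnit g


open Finset

section Lemmas
variable {A : Type*} [CommRing A] [Algebra ℚ A]

theorem iterate_leibniz (D : Derivation ℚ A A) (n : ℕ) (p q : A) :
    D^[n] (p * q) =
      ∑ k ∈ range n.succ, (n.choose k • (D^[n - k] p * D^[k] q)) := by
  induction n with
  | zero =>
    simp [Finset.range]
  | succ n IH =>
    calc
      D^[n + 1] (p * q) =
          D (∑ k ∈ range n.succ,
              n.choose k • (D^[n - k] p * D^[k] q)) := by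
        rw [Function.iterate_succ_apply', IH]
      _ = (∑ k ∈ range n.succ,
            n.choose k • (D^[n - k + 1] p * D^[k] q)) +
          ∑ k ∈ range n.succ,
            n.choose k • (D^[n - k] p * D^[k + 1] q) := by
        rw [map_sum]
        simp_rw [map_nsmul]
        have hmul : ∀ a b : A, D (a * b) = D a * b + a * D b := by
          intro a b
          rw [D.leibniz]
          simp only [smul_eq_mul]
          ring
        simp_rw [hmul, Function.iterate_succ_apply', smul_add, sum_add_distrib]
      _ = (∑ k ∈ range n.succ,
                n.choose k.succ • (D^[n - k] p * D^[k + 1] q)) +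
              1 • (D^[n + 1] p * D^[0] q) +
            ∑ k ∈ range n.succ, n.choose k • (D^[n - k] p * D^[k + 1] q) :=
        ?_
      _ = ((∑ k ∈ range n.succ, n.choose k • (D^[n - k] p * D^[k + 1] q)) +
              ∑ k ∈ range n.succ,
                n.choose k.succ • (D^[n - k] p * D^[k + 1] q)) +
            1 • (D^[n + 1] p * D^[0] q) := by
        rw [add_comm, add_assoc]
      _ = (∑ i ∈ range n.succ,
              (n + 1).choose (i + 1) • (D^[n + 1 - (i + 1)] p * D^[i + 1] q)) +
            1 • (D^[n + 1] p * D^[0] q) := by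
        simp_rw [Nat.choose_succ_succ, Nat.succ_sub_succ, add_smul, sum_add_distrib]
      _ = ∑ k ∈ range n.succ.succ,
            n.succ.choose k • (D^[n.succ - k] p * D^[k] q) := by
        rw [sum_range_succ' _ n.succ, Nat.choose_zero_right, tsub_zero]
    congr
    refine (sum_range_succ' _ _).trans (congr_arg₂ (· + ·) ?_ ?_)
    · rw [sum_range_succ, Nat.choose_succ_self, zero_smul, add_zero]
      refine sum_congr rfl fun k hk => ?_
      rw [mem_range] at hk
      congr
      omega
    · rw [Nat.choose_zero_right, tsub_zero]

theorem iterate_zero_of_le (D : Derivation ℚ A A) {x : A} {m : ℕ} (hm : D^[m] x = 0)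
    {k : ℕ} (hk : m ≤ k) : D^[k] x = 0 := by
  obtain ⟨t, rfl⟩ := Nat.exists_eq_add_of_le hk
  rw [add_comm, Function.iterate_add_apply, hm]
  exact Function.iterate_fixed (map_zero D) t

/-- Leading term lemma. -/
theorem iterate_lead (D : Derivation ℚ A A) {x y : A} {m n : ℕ}
    (hx : D^[m + 1] x = 0) (hy : D^[n + 1] y = 0) :
    D^[m + n] (x * y) = (m + n).choose n • (D^[m] x * D^[n] y) := by
  rw [iterate_leibniz]
  rw [Finset.sum_eq_single n]
  · rw [Nat.add_sub_cancel]
  · intro k hk hkn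
    rcases lt_or_gt_of_ne hkn with h | h
    · have : D^[m + n - k] x = 0 := iterate_zero_of_le D hx (by omega)
      rw [this, zero_mul, smul_zero]
    · have : D^[k] y = 0 := iterate_zero_of_le D hy (by omega)
      rw [this, mul_zero, smul_zero]
  · intro h
    exfalso; exact h (mem_range.mpr (by omega))

end Lemmas

section Dom
variable {A : Type*} [CommRing A] [IsDomain A] [Algebra ℚ A]

theorem charzeroA : CharZero A :=
  charZero_of_injective_algebraMap (algebraMap ℚ A).injective

/-- leading term nonzero version -/
theorem iterate_lead_ne (D : Derivation ℚ A A) {x y : A} {m n : ℕ}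
    (hx : D^[m + 1] x = 0) (hx' : D^[m] x ≠ 0) (hy : D^[n + 1] y = 0) (hy' : D^[n] y ≠ 0) :
    D^[m + n] (x * y) ≠ 0 := by
  haveI := charzeroA (A := A)
  rw [iterate_lead D hx hy]
  have h1 : D^[m] x * D^[n] y ≠ 0 := mul_ne_zero hx' hy'
  have h2 : ((m + n).choose n : ℕ) ≠ 0 := (Nat.choose_pos (Nat.le_add_left n m)).ne'
  exact smul_ne_zero h2 h1

/-- minimal index: for x ≠ 0 under an LND there is m with D^[m] x ≠ 0, D^[m+1] x = 0. -/
theorem exists_min_ord (D : Derivation ℚ A A) (hD : IsLND ⇑D) {x : A} (hx : x ≠ 0) :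
    ∃ m : ℕ, D^[m] x ≠ 0 ∧ D^[m + 1] x = 0 := by
  classical
  obtain ⟨n, hn⟩ := hD x
  have hN : ∃ n, D^[n] x = 0 := ⟨n, hn⟩
  set N := Nat.find hN with hNdef
  have hN0 : N ≠ 0 := by
    intro h
    have := Nat.find_spec hN
    rw [← hNdef, h] at this
    exact hx this
  refine ⟨N - 1, ?_, ?_⟩
  · exact Nat.find_min hN (by omega)
  · have : N - 1 + 1 = N := by omega
    rw [this]; exact Nat.find_spec hN

/-- kernel of an LND is factorially closed. -/
theorem fact_closed (D : Derivation ℚ A A) (hD : IsLND ⇑D) {x y : A}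
    (hx : x ≠ 0) (hy : y ≠ 0) (hxy : D (x * y) = 0) : D x = 0 := by
  obtain ⟨m, hm', hm⟩ := exists_min_ord D hD hx
  obtain ⟨n, hn', hn⟩ := exists_min_ord D hD hy
  by_cases h : m = 0
  · subst h; simpa using hm
  exfalso
  have hne := iterate_lead_ne D hm hm' hn hn'
  have : D^[m + n] (x * y) = 0 := by
    have h1 : (1:ℕ) ≤ m + n := by omega
    have : D^[1] (x*y) = 0 := by simpa using hxy
    exact iterate_zero_of_le D this h1
  exact hne this

end Dom

section Quot
variable {A : Type*} [CommRing A] [IsDomain A] [Algebra ℚ A]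

/-- Quotient of a derivation by an element dividing all its values. -/
noncomputable def quotDeriv (F : Derivation ℚ A A) (p : A) (hp : p ≠ 0)
    (hd : ∀ a : A, p ∣ F a) : Derivation ℚ A A where
  toFun a := Classical.choose (hd a)
  map_add' a b := by
    apply mul_left_cancel₀ hp
    show p * Classical.choose (hd (a + b)) = p * (Classical.choose (hd a) + Classical.choose (hd b))
    rw [mul_add, ← Classical.choose_spec (hd (a + b)),
      ← Classical.choose_spec (hd a), ← Classical.choose_spec (hd b), map_add]
  map_smul' q a := by
    apply mul_left_cancel₀ hp
    show p * Classical.choose (hd (q • a)) = p * (q • Classical.choose (hd a))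
    rw [← Classical.choose_spec (hd (q • a)), F.map_smul, mul_smul_comm,
      ← Classical.choose_spec (hd a)]
  map_one_eq_zero' := by
    apply mul_left_cancel₀ hp
    show p * Classical.choose (hd 1) = p * 0
    rw [mul_zero, ← Classical.choose_spec (hd 1)]
    exact F.map_one_eq_zero
  leibniz' a b := by
    apply mul_left_cancel₀ hp
    show p * Classical.choose (hd (a * b)) =
      p * (a • Classical.choose (hd b) + b • Classical.choose (hd a))
    rw [← Classical.choose_spec (hd (a * b)), F.leibniz]
    simp only [smul_eq_mul, mul_add]
    rw [show p * (a * Classical.choose (hd b)) = a * (p * Classical.choose (hd b)) by ring,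
      show p * (b * Classical.choose (hd a)) = b * (p * Classical.choose (hd a)) by ring,
      ← Classical.choose_spec (hd a), ← Classical.choose_spec (hd b)]

theorem quotDeriv_spec (F : Derivation ℚ A A) (p : A) (hp : p ≠ 0)
    (hd : ∀ a : A, p ∣ F a) (a : A) : p * quotDeriv F p hp hd a = F a :=
  (Classical.choose_spec (hd a)).symm

/-- If `p` divides all values of an irreducible LND `F` with `F p = 0`, then `p` is a unit. -/
theorem unit_of_dvd_all (F : Derivation ℚ A A) (hirr : IsIrreducibleLND F)
    (p : A) (hp : p ≠ 0) (hFp : F p = 0) (hd : ∀ a : A, p ∣ F a) : IsUnit p := by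
  set F' := quotDeriv F p hp hd with hF'
  have hspec : ∀ a, p * F' a = F a := quotDeriv_spec F p hp hd
  have hF'p : F' p = 0 := by
    have := hspec p
    rw [hFp] at this
    exact (mul_eq_zero.mp this).resolve_left hp
  have heq : F = p • F' := by
    ext a
    have : (p • F') a = p * F' a := rfl
    rw [this, hspec]
  have hpow : ∀ n a, F^[n] a = p ^ n * F'^[n] a := by
    intro n
    induction n with
    | zero => intro a; simp
    | succ n ih =>
      intro a
      have hpn : F' (p ^ n) = 0 := by
        clear ih
        induction n with
        | zero => simp
        | succ k ihk =>
          rw [pow_succ, F'.leibniz]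
          simp [smul_eq_mul, ihk, hF'p]
      rw [Function.iterate_succ_apply', Function.iterate_succ_apply', ih,
        ← hspec (p ^ n * F'^[n] a), F'.leibniz]
      simp only [smul_eq_mul, hpn, mul_zero, add_zero]
      ring
  have hLND : IsLND ⇑F' := by
    intro a
    obtain ⟨n, hn⟩ := hirr.2.1 a
    refine ⟨n, ?_⟩
    have := hpow n a
    rw [hn] at this
    exact (mul_eq_zero.mp this.symm).resolve_left (pow_ne_zero n hp)
  exact hirr.2.2 p F' hLND hF'p heq

end Quot

section Main
variable {A : Type*} [CommRing A] [IsDomain A] [UniqueFactorizationMonoid A] [Algebra ℚ A]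

theorem iter_neg (D : Derivation ℚ A A) (n : ℕ) (u : A) : (⇑D)^[n] (-u) = -((⇑D)^[n] u) := by
  induction n with
  | zero => simp
  | succ n ih => rw [Function.iterate_succ_apply', Function.iterate_succ_apply', ih, map_neg]

theorem dvd_aux (B F : Derivation ℚ A A) (hirr : IsIrreducibleLND F) :
    ∀ f : A, f ≠ 0 → F f = 0 →
      ∀ g : A, (∀ a, f * (F (B a) - B (F a)) = g * F a) → f ∣ g := by
  intro f
  induction f using UniqueFactorizationMonoid.induction_on_prime with
  | h₁ => intro h; exact absurd rfl h
  | h₂ x hx => intro _ _ g _; exact hx.dvd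
  | h₃ f' p hf'0 hp ih =>
    intro hne hker g hrel
    have hp0 : p ≠ 0 := hp.ne_zero
    have hFp : F p = 0 := fact_closed F hirr.2.1 hp0 hf'0 hker
    have hFf' : F f' = 0 := fact_closed F hirr.2.1 hf'0 hp0 (by rwa [mul_comm])
    have hpg : p ∣ g := by
      by_contra hnd
      have hdall : ∀ a, p ∣ F a := by
        intro a
        have h1 : p ∣ g * F a := ⟨f' * (F (B a) - B (F a)), by rw [← hrel a]; ring⟩
        exact (hp.2.2 g (F a) h1).resolve_left hnd
      exact hp.not_unit (unit_of_dvd_all F hirr p hp0 hFp hdall)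
    obtain ⟨g', rfl⟩ := hpg
    have hrel' : ∀ a, f' * (F (B a) - B (F a)) = g' * F a := by
      intro a
      apply mul_left_cancel₀ hp0
      rw [show p * (f' * (F (B a) - B (F a))) = p * f' * (F (B a) - B (F a)) by ring, hrel a]
      ring
    exact mul_dvd_mul_left p (ih hf'0 hFf' g' hrel')

theorem sat_property' (B F : Derivation ℚ A A) (hB0 : B ≠ 0) (hF0 : F ≠ 0)
    (hB : IsLND ⇑B) (hF : IsLND ⇑F) (hirr : IsIrreducibleLND F)
    (f : A) (hf0 : f ≠ 0) (hf : F f = 0)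
    (hcomm : ∀ a : A, f * F (B a) - B (f * F a) = 0) :
    B f = 0 ∧ ∀ a : A, F (B a) - B (F a) = 0 := by
  classical
  have hrel : ∀ a, f * (F (B a) - B (F a)) = B f * F a := by
    intro a
    have h := hcomm a
    rw [B.leibniz] at h
    simp only [smul_eq_mul] at h
    linear_combination h
  obtain ⟨h, hg⟩ := dvd_aux B F hirr f hf0 hf (B f) hrel
  by_cases hh : h = 0
  · constructor
    · rw [hg, hh, mul_zero]
    · intro a
      have h1 := hrel a
      rw [hg, hh, mul_zero, zero_mul] at h1
      exact (mul_eq_zero.mp h1).resolve_left hf0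
  · exfalso
    have hg0 : B f ≠ 0 := by rw [hg]; exact mul_ne_zero hf0 hh
    have hFBf : F (B f) = 0 := by
      have h1 := hcomm f
      rw [hf, mul_zero, map_zero, sub_zero] at h1
      exact (mul_eq_zero.mp h1).resolve_left hf0
    have hFh : F h = 0 := by
      apply fact_closed F hirr.2.1 hh hf0
      rw [mul_comm, ← hg]
      exact hFBf
    have hrel2 : ∀ a, F (B a) - B (F a) = h * F a := by
      intro a
      apply mul_left_cancel₀ hf0
      rw [hrel a, hg]; ring
    obtain ⟨a, ha⟩ : ∃ a, F a ≠ 0 := by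
      by_contra hno
      push_neg at hno
      exact hF0 (by ext x; simp [hno x])
    set T : A → A := fun x => B x + h * x with hT
    have key : ∀ n, F ((⇑B)^[n] a) = T^[n] (F a) := by
      intro n
      induction n with
      | zero => simp
      | succ n ihn =>
        rw [Function.iterate_succ_apply', Function.iterate_succ_apply', ← ihn]
        have h2 := hrel2 ((⇑B)^[n] a)
        show F (B ((⇑B)^[n] a)) = B (F ((⇑B)^[n] a)) + h * F ((⇑B)^[n] a)
        linear_combination h2
    have hTnz : ∀ x : A, x ≠ 0 → T x ≠ 0 := by
      intro x hx
      by_cases hBx : B x = 0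
      · show B x + h * x ≠ 0
        rw [hBx, zero_add]
        exact mul_ne_zero hh hx
      · intro h0
        have hhx : h * x = -(B x) := by
          have : B x + h * x = 0 := h0
          linear_combination this
        obtain ⟨m, hm', hm⟩ := exists_min_ord B hB hx
        obtain ⟨k, hk', hk⟩ := exists_min_ord B hB hh
        apply iterate_lead_ne B hk hk' hm hm'
        rw [hhx, iter_neg, neg_eq_zero, ← Function.iterate_succ_apply]
        exact iterate_zero_of_le B hm (by omega)
    have hTn : ∀ n, T^[n] (F a) ≠ 0 := by
      intro n
      induction n with
      | zero => simpa using ha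
      | succ n ihn =>
        rw [Function.iterate_succ_apply']
        exact hTnz _ ihn
    obtain ⟨M, hM⟩ := hB a
    have hz := key M
    rw [hM, map_zero] at hz
    exact hTn M hz.symm

end Main

/-- Saturation: if `B`, `F` are nonzero locally nilpotent derivations of a UFD
containing `ℚ`, `F` is irreducible, `0 ≠ f ∈ ker F`, and `[f F, B] = 0`, then
`B f = 0` and `[F, B] = 0`. -/
theorem sat_property {A : Type*} [CommRing A] [IsDomain A] [UniqueFactorizationMonoid A]
    [Algebra ℚ A] (B F : Derivation ℚ A A) (hB0 : B ≠ 0) (hF0 : F ≠ 0)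
    (hB : IsLND ⇑B) (hF : IsLND ⇑F) (hirr : IsIrreducibleLND F)
    (f : A) (hf0 : f ≠ 0) (hf : F f = 0)
    (hcomm : ∀ a : A, f * F (B a) - B (f * F a) = 0) :
    B f = 0 ∧ ∀ a : A, F (B a) - B (F a) = 0 := by
  exact sat_property' B F hB0 hF0 hB hF hirr f hf0 hf hcomm
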